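/- Let G be an ordered abelian group such that for every prime p there exists a nontrivial convex subgroup G_p of G all of whose elements are p-divisible in G_p. Then G is closed in its divisible hull: no element of the divisible hull outside G is a limit point of G. -/

import Mathlib

private lemma nsmul_lt_of_lt {D : Type*} [AddCommGroup D] [LinearOrder D] [IsOrderedAddMonoid D] {a b : D} {n : ℕ}
    (hn : 0 < n) (h : a < b) : n • a < n • b := by
  have h1 : 0 < n • (b - a) := nsmul_pos (sub_pos.mpr h) hn.ne'
  have h2 : n • a + n • (b - a) = n • b := by rw [← nsmul_add, add_sub_cancel]
  have h3 := lt_add_of_pos_right (n • a) h1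
  rwa [h2] at h3

private lemma nsmul_injective {D : Type*} [AddCommGroup D] [LinearOrder D] [IsOrderedAddMonoid D] {n : ℕ}
    (hn : 0 < n) : Function.Injective (fun a : D => n • a) := by
  have hsm : StrictMono (fun a : D => n • a) := fun _ _ h => nsmul_lt_of_lt hn h
  exact hsm.injective

/-- Let `G` be an ordered abelian group such that for every prime `p` there is a nontrivial
convex subgroup `G_p` of `G` all of whose elements are `p`-divisible in `G_p`. Then `G` is
closed in its divisible hull `D` (modelled as a divisible ordered abelian group `D` with an
order-embedding `f : G →+ D` such that every element of `D` has a positive multiple in the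
image of `f`): no element of `D` outside the image of `G` is a limit point of `G`. -/
theorem stmt_3 {G D : Type*} [AddCommGroup G] [LinearOrder G] [IsOrderedAddMonoid G]
    [AddCommGroup D] [LinearOrder D] [IsOrderedAddMonoid D]
    (f : G →+ D) (hf : StrictMono f)
    (hdivD : ∀ (d : D) (n : ℕ), 0 < n → ∃ e : D, n • e = d)
    (hhull : ∀ d : D, ∃ (n : ℕ) (g : G), 0 < n ∧ n • d = f g)
    (hp : ∀ p : ℕ, p.Prime → ∃ Gp : AddSubgroup G, Gp ≠ ⊥ ∧
      (∀ a b : G, b ∈ Gp → 0 ≤ a → a ≤ b → a ∈ Gp) ∧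
      (∀ h ∈ Gp, ∃ h' ∈ Gp, p • h' = h)) :
    ∀ x : D, x ∉ Set.range f →
      ∃ a b : D, a < x ∧ x < b ∧ ∀ g : G, f g ∉ Set.Ioo a b := by
  classical
  intro x hx
  have hex : ∃ n : ℕ, 0 < n ∧ ∃ g : G, n • x = f g := by
    obtain ⟨n, g, hn, hg⟩ := hhull x
    exact ⟨n, hn, g, hg⟩
  set n := Nat.find hex with hn_def
  obtain ⟨hnpos, g', hg'⟩ := Nat.find_spec hex
  rw [← hn_def] at hnpos hg'
  have hn1 : n ≠ 1 := by
    intro h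
    rw [h, one_nsmul] at hg'
    exact hx ⟨g', hg'.symm⟩
  obtain ⟨p, hpprime, hpd⟩ := Nat.exists_prime_and_dvd hn1
  obtain ⟨q, hq⟩ := hpd
  have hqpos : 0 < q := by
    rcases Nat.eq_zero_or_pos q with h | h
    · exfalso; rw [h, Nat.mul_zero] at hq; exact hnpos.ne' hq
    · exact h
  have hqlt : q < n := by
    rw [hq]
    calc q = 1 * q := (Nat.one_mul q).symm
    _ < p * q := (Nat.mul_lt_mul_right hqpos).mpr hpprime.one_lt
  have hqx : ¬ ∃ g : G, q • x = f g := by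
    intro hgq
    exact Nat.find_min hex hqlt ⟨hqpos, hgq⟩
  obtain ⟨Gp, hGne, hconv, hdiv⟩ := hp p hpprime
  obtain ⟨h0, hh0mem, hh0ne⟩ : ∃ h0 ∈ Gp, h0 ≠ 0 := by
    by_contra hcon
    push_neg at hcon
    apply hGne
    ext y
    simp only [AddSubgroup.mem_bot]
    exact ⟨fun hy => hcon y hy, fun hy => hy ▸ Gp.zero_mem⟩
  have hhmem : |h0| ∈ Gp := by
    rcases abs_choice h0 with h | h
    · rw [h]; exact hh0mem
    · rw [h]; exact Gp.neg_mem hh0mem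
  have hhpos : 0 < |h0| := abs_pos.mpr hh0ne
  set h : G := |h0|
  have hfhpos : (0 : D) < f h := by
    have := hf hhpos
    rwa [map_zero] at this
  obtain ⟨e, he⟩ := hdivD (f h) n hnpos
  have hepos : 0 < e := by
    by_contra hcon
    push_neg at hcon
    have : n • e ≤ n • (0 : D) := by
      rcases lt_or_eq_of_le hcon with hlt | heq
      · exact (nsmul_lt_of_lt hnpos hlt).le
      · rw [heq]
    rw [smul_zero, he] at this
    exact absurd this (not_le.mpr hfhpos)
  refine ⟨x - e, x + e, sub_lt_self x hepos, lt_add_of_pos_right x hepos, ?_⟩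
  intro g hg
  obtain ⟨hg1, hg2⟩ := hg
  -- -e < f g - x < e
  have hb1 : x - f g < e := sub_lt_comm.mp hg1
  have hb2 : f g - x < e := sub_lt_iff_lt_add'.mpr hg2
  -- multiply by n
  have hnb1 : n • (x - f g) < f h := by
    calc n • (x - f g) < n • e := nsmul_lt_of_lt hnpos hb1
    _ = f h := he
  have hnb2 : n • (f g - x) < f h := by
    calc n • (f g - x) < n • e := nsmul_lt_of_lt hnpos hb2
    _ = f h := he
  -- rewrite n • (f g - x) = f (n • g) - f g'
  have hkey : n • (f g) - f g' = f (n • g - g') := by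
    rw [map_sub, map_nsmul]
  have hrw : n • (f g - x) = f (n • g - g') := by
    have : n • (f g - x) = n • (f g) - n • x := by
      rw [smul_sub]
    rw [this, hg', hkey]
  have hrw' : n • (x - f g) = f (g' - n • g) := by
    have h1 : n • (x - f g) = -(n • (f g - x)) := by
      rw [← smul_neg, neg_sub]
    rw [h1, hrw, ← map_neg, neg_sub]
  -- so |n•g - g'| < h
  have hlt1 : n • g - g' < h := by
    have := hrw ▸ hnb2
    exact hf.lt_iff_lt.mp this
  have hlt2 : g' - n • g < h := by
    have := hrw' ▸ hnb1
    exact hf.lt_iff_lt.mp this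
  set d : G := g' - n • g with hd_def
  have hdmem : d ∈ Gp := by
    rcases le_total 0 d with hd0 | hd0
    · exact hconv d h hhmem hd0 hlt2.le
    · have : -d ∈ Gp := by
        apply hconv (-d) h hhmem (neg_nonneg.mpr hd0)
        have : -d = n • g - g' := by rw [hd_def, neg_sub]
        rw [this]; exact hlt1.le
      have := Gp.neg_mem this
      rwa [neg_neg] at this
  obtain ⟨d1, hd1mem, hd1⟩ := hdiv d hdmem
  -- now q • x = f (q • g + d1)
  apply hqx
  refine ⟨q • g + d1, ?_⟩
  apply nsmul_injective (D := D) hpprime.pos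
  show p • (q • x) = p • f (q • g + d1)
  have hpq : p • (q • x) = n • x := by rw [← mul_nsmul', hq]
  rw [hpq, hg']
  have hg'eq : g' = n • g + d := by rw [hd_def]; abel
  rw [hg'eq, ← hd1, map_add, map_nsmul, map_nsmul]
  have : (n : ℕ) • (f g) = p • (q • f g) := by rw [← mul_nsmul', hq]
  rw [this, map_add, map_nsmul, smul_add]
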